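/- Let ψ : ℝ → ℂ be a continuously differentiable function with ψ(0) = 1, |ψ(x)| ≤ 1, such that |ψ'(x)/ψ(x)²| = |F₊[u v₁](x)|/|ψ(x)| where |F₊[u v₁](x)| ≲ (1+x²)^{-1/2}, and suppose that x ↦ (1+x²)^{-(1−ε)/2}/ψ(x) ∈ L²(ℝ) for some ε ∈ (0, 1/2). Then 1/|ψ(x)| ≲ (1+|x|)^{1/2−ε} for all x ∈ ℝ. -/

import Mathlib

open MeasureTheory

set_option maxHeartbeats 1000000 in
/-- If `ψ : ℝ → ℂ` is C¹ with `ψ(0) = 1`, `|ψ| ≤ 1`, nonvanishing,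
`|ψ'(x)/ψ(x)²| = |F(x)|/|ψ(x)|` with `|F(x)| ≲ (1+x²)^{-1/2}` (here `F = F₊[u v₁]`),
and `x ↦ (1+x²)^{-(1-ε)/2}/ψ(x) ∈ L²(ℝ)` for some `ε ∈ (0,1/2)`, then
`1/|ψ(x)| ≲ (1+|x|)^{1/2-ε}`. -/
theorem inv_psi_growth (ψ : ℝ → ℂ) (F : ℝ → ℂ) (ε : ℝ)
    (hε : ε ∈ Set.Ioo (0 : ℝ) (1/2))
    (hC1 : ContDiff ℝ 1 ψ)
    (hψ0 : ψ 0 = 1)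
    (hψle : ∀ x, ‖ψ x‖ ≤ 1)
    (hψne : ∀ x, ψ x ≠ 0)
    (hratio : ∀ x, ‖deriv ψ x / (ψ x) ^ 2‖ = ‖F x‖ / ‖ψ x‖)
    (hF : ∃ C : ℝ, ∀ x, ‖F x‖ ≤ C * (1 + x ^ 2) ^ (-(1/2) : ℝ))
    (hL2 : MemLp (fun x : ℝ => ((1 + x ^ 2) ^ (-(1 - ε)/2) : ℝ) / ψ x) 2
      (volume : Measure ℝ)) :
    ∃ C : ℝ, ∀ x : ℝ, 1 / ‖ψ x‖ ≤ C * (1 + |x|) ^ ((1/2 : ℝ) - ε) := by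
  obtain ⟨hε0, hεhalf⟩ := hε
  obtain ⟨C₀, hF⟩ := hF
  set C : ℝ := max C₀ 0 with hCdef
  have hC0 : (0:ℝ) ≤ C := le_max_right _ _
  have hone : ∀ t : ℝ, (0:ℝ) < 1 + t ^ 2 := by
    intro t; positivity
  have hψpos : ∀ x, (0:ℝ) < ‖ψ x‖ := fun x => norm_pos_iff.mpr (hψne x)
  have hF' : ∀ x, ‖F x‖ ≤ C * (1 + x ^ 2) ^ (-(1/2) : ℝ) := fun x =>
    (hF x).trans (mul_le_mul_of_nonneg_right (le_max_left _ _)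
      (Real.rpow_nonneg (hone x).le _))
  -- the weight functions
  set a : ℝ → ℝ := fun t => (1 + t ^ 2) ^ (-ε/2 : ℝ) with hadef
  set h : ℝ → ℝ := fun t => (1 + t ^ 2) ^ (-(1 - ε)/2 : ℝ) / ‖ψ t‖ with hhdef
  have ha_nonneg : ∀ t, 0 ≤ a t := fun t => Real.rpow_nonneg (hone t).le _
  have hh_nonneg : ∀ t, 0 ≤ h t := fun t =>
    div_nonneg (Real.rpow_nonneg (hone t).le _) (norm_nonneg _)
  have ha_le_one : ∀ t, a t ≤ 1 := by
    intro t
    exact Real.rpow_le_one_of_one_le_of_nonpos (by nlinarith [sq_nonneg t]) (by linarith)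
  have ha_cont : Continuous a := by
    apply Continuous.rpow_const (by continuity)
    intro t; exact Or.inl (hone t).ne'
  have hL2' : MemLp h 2 (volume : Measure ℝ) := by
    refine hL2.norm.ae_eq (Filter.Eventually.of_forall fun t => ?_)
    simp only [norm_div, Complex.norm_real, Real.norm_eq_abs,
      abs_of_nonneg (Real.rpow_nonneg (hone t).le _), hhdef]
  have hint_h2 : Integrable (fun t => h t ^ (2:ℝ)) (volume : Measure ℝ) := by
    have h2 := hL2'.integrable_sq
    refine h2.congr (Filter.Eventually.of_forall fun t => ?_)
    show h t ^ (2:ℕ) = h t ^ (2:ℝ)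
    rw [← Real.rpow_natCast (h t) 2]; norm_num
  set M : ℝ := (∫ t, h t ^ (2:ℝ)) ^ (1/2 : ℝ) with hMdef
  have hM0 : 0 ≤ M := Real.rpow_nonneg (integral_nonneg fun t => Real.rpow_nonneg (hh_nonneg t) _) _
  -- the continuous version of the integrand
  set φ : ℝ → ℝ := fun t => ‖deriv ψ t / (ψ t) ^ 2‖ with hφdef
  have hφ_nonneg : ∀ t, 0 ≤ φ t := fun t => norm_nonneg _
  have hφ_cont : Continuous φ := by
    apply Continuous.norm
    exact (hC1.continuous_deriv le_rfl).div (hC1.continuous.pow 2)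
      (fun t => pow_ne_zero 2 (hψne t))
  have hφ_le : ∀ t, φ t ≤ C * (a t * h t) := by
    intro t
    have hsplit : (1 + t ^ 2) ^ (-(1/2) : ℝ)
        = a t * (1 + t ^ 2) ^ (-(1 - ε)/2 : ℝ) := by
      rw [hadef]
      rw [← Real.rpow_add (hone t)]
      ring_nf
    calc φ t = ‖F t‖ / ‖ψ t‖ := hratio t
      _ ≤ (C * (1 + t ^ 2) ^ (-(1/2) : ℝ)) / ‖ψ t‖ := by
          gcongr
          exact hF' t
      _ = C * (a t * h t) := by
          rw [hsplit, hhdef]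
          ring
  -- Step 1: FTC bound
  have key1 : ∀ x : ℝ, 1 / ‖ψ x‖ ≤ 1 + |∫ t in (0:ℝ)..x, φ t| := by
    intro x
    set g : ℝ → ℂ := fun y => 1 / ψ y with hgdef
    have hg : ContDiff ℝ 1 g := by
      rw [hgdef]; have := hC1.inv hψne; simp only [one_div]; exact this
    have hgd : ∀ y, deriv g y = -deriv ψ y / ψ y ^ 2 := by
      intro y
      rw [hgdef]
      rw [deriv_fun_div (differentiableAt_const 1) (hC1.differentiable one_ne_zero y) (hψne y)]
      simp [neg_div]
    have hgc : Continuous (deriv g) := hg.continuous_deriv le_rfl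
    have hFTC : ∫ t in (0:ℝ)..x, deriv g t = g x - g 0 :=
      intervalIntegral.integral_deriv_eq_sub (fun t _ => hg.differentiable one_ne_zero t)
        (hgc.intervalIntegrable 0 x)
    have h0 : g 0 = 1 := by rw [hgdef]; simp [hψ0]
    have hgx : 1 / ‖ψ x‖ = ‖g x‖ := by
      rw [hgdef]; simp
    have hnormint : ‖∫ t in (0:ℝ)..x, deriv g t‖ ≤ |∫ t in (0:ℝ)..x, φ t| := by
      have h1 := intervalIntegral.norm_integral_le_abs_integral_norm
        (f := deriv g) (a := 0) (b := x) (μ := volume)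
      have h2 : (∫ t in (0:ℝ)..x, ‖deriv g t‖) = ∫ t in (0:ℝ)..x, φ t := by
        refine intervalIntegral.integral_congr fun t _ => ?_
        rw [hgd t, hφdef]
        simp [neg_div]
      rwa [h2] at h1
    calc 1 / ‖ψ x‖ = ‖g 0 + ∫ t in (0:ℝ)..x, deriv g t‖ := by
          rw [hFTC, hgx]; ring_nf
      _ ≤ ‖g 0‖ + ‖∫ t in (0:ℝ)..x, deriv g t‖ := norm_add_le _ _
      _ ≤ 1 + |∫ t in (0:ℝ)..x, φ t| := by
          rw [h0, norm_one]
          exact add_le_add_right hnormint 1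
  -- Step 2: Cauchy-Schwarz on an interval
  have keyCS : ∀ u v : ℝ, u ≤ v →
      (∫ t in u..v, φ t) ≤ C * ((∫ t in u..v, (1 + t ^ 2) ^ (-ε : ℝ)) ^ (1/2 : ℝ)) * M := by
    intro u v huv
    haveI : IsFiniteMeasure (volume.restrict (Set.Ioc u v)) :=
      ⟨by rw [Measure.restrict_apply_univ]; exact measure_Ioc_lt_top⟩
    set μr := volume.restrict (Set.Ioc u v) with hμr
    have h2eq : ENNReal.ofReal (2:ℝ) = 2 := by norm_num
    have hmema : MemLp a 2 μr :=
      MemLp.of_bound ha_cont.aestronglyMeasurable 1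
        (Filter.Eventually.of_forall fun t => by
          rw [Real.norm_eq_abs, abs_of_nonneg (ha_nonneg t)]; exact ha_le_one t)
    have hmemh : MemLp h 2 μr := hL2'.restrict _
    have hint_ah : Integrable (fun t => a t * h t) μr := by
      have hs : MemLp (a • h) 1 μr := by
        haveI : ENNReal.HolderTriple 2 2 1 := ⟨by
          rw [inv_one, ← one_div]
          exact ENNReal.add_halves 1⟩
        exact hmemh.smul hmema
      exact memLp_one_iff_integrable.mp hs
    have hHolder : (∫ t, a t * h t ∂μr)
        ≤ (∫ t, a t ^ (2:ℝ) ∂μr) ^ (1/2 : ℝ) * (∫ t, h t ^ (2:ℝ) ∂μr) ^ (1/2 : ℝ) := by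
      have h22 : Real.HolderConjugate 2 2 := ⟨by norm_num, by norm_num, by norm_num⟩
      have := integral_mul_le_Lp_mul_Lq_of_nonneg h22
        (Filter.Eventually.of_forall ha_nonneg) (Filter.Eventually.of_forall hh_nonneg)
        (h2eq ▸ hmema) (h2eq ▸ hmemh)
      simpa using this
    have hh2 : (∫ t, h t ^ (2:ℝ) ∂μr) ^ (1/2 : ℝ) ≤ M := by
      rw [hMdef]
      refine Real.rpow_le_rpow (integral_nonneg fun t => Real.rpow_nonneg (hh_nonneg t) _)
        ?_ (by norm_num)
      exact setIntegral_le_integral hint_h2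
        (Filter.Eventually.of_forall fun t => Real.rpow_nonneg (hh_nonneg t) _)
    have ha2 : (∫ t, a t ^ (2:ℝ) ∂μr) = ∫ t in u..v, (1 + t ^ 2) ^ (-ε : ℝ) := by
      rw [intervalIntegral.integral_of_le huv]
      refine setIntegral_congr_fun measurableSet_Ioc fun t _ => ?_
      show ((1 + t ^ 2) ^ (-ε/2 : ℝ)) ^ (2:ℝ) = (1 + t ^ 2) ^ (-ε : ℝ)
      rw [← Real.rpow_mul (hone t).le]
      norm_num
    calc (∫ t in u..v, φ t) = ∫ t, φ t ∂μr := intervalIntegral.integral_of_le huv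
      _ ≤ ∫ t, C * (a t * h t) ∂μr := by
          refine integral_mono_of_nonneg (Filter.Eventually.of_forall hφ_nonneg)
            (hint_ah.const_mul C) (Filter.Eventually.of_forall hφ_le)
      _ = C * ∫ t, a t * h t ∂μr := integral_const_mul C _
      _ ≤ C * ((∫ t, a t ^ (2:ℝ) ∂μr) ^ (1/2 : ℝ) * (∫ t, h t ^ (2:ℝ) ∂μr) ^ (1/2 : ℝ)) := by
          exact mul_le_mul_of_nonneg_left hHolder hC0
      _ ≤ C * ((∫ t, a t ^ (2:ℝ) ∂μr) ^ (1/2 : ℝ) * M) := by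
          refine mul_le_mul_of_nonneg_left (mul_le_mul_of_nonneg_left hh2 ?_) hC0
          exact Real.rpow_nonneg (integral_nonneg fun t => Real.rpow_nonneg (ha_nonneg t) _) _
      _ = C * ((∫ t in u..v, (1 + t ^ 2) ^ (-ε : ℝ)) ^ (1/2 : ℝ)) * M := by
          rw [ha2]; ring
  -- Step 3: the weight integral bound
  have key3 : ∀ X : ℝ, 0 ≤ X →
      (∫ t in (0:ℝ)..X, (1 + t ^ 2) ^ (-ε : ℝ))
        ≤ (2:ℝ) ^ ε / (1 - 2*ε) * (1 + X) ^ (1 - 2*ε) := by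
    intro X hX
    have hd : (0:ℝ) < 1 - 2*ε := by linarith
    have hcont1 : Continuous (fun t : ℝ => (1 + t ^ 2) ^ (-ε : ℝ)) := by
      apply Continuous.rpow_const (by continuity)
      intro t; exact Or.inl (hone t).ne'
    have hcont2 : ContinuousOn (fun t : ℝ => (2:ℝ) ^ ε * (1 + t) ^ (-(2*ε) : ℝ))
        (Set.uIcc 0 X) := by
      refine continuousOn_const.mul ?_
      refine ContinuousOn.rpow_const (by fun_prop) fun t ht => ?_
      rw [Set.uIcc_of_le hX] at ht
      exact Or.inl (by linarith [ht.1])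
    have hpt : ∀ t ∈ Set.Icc (0:ℝ) X,
        (1 + t ^ 2) ^ (-ε : ℝ) ≤ (2:ℝ) ^ ε * (1 + t) ^ (-(2*ε) : ℝ) := by
      intro t ht
      have ht0 : (0:ℝ) ≤ t := ht.1
      have h1t : (0:ℝ) < 1 + t := by linarith
      have hsq : ((1 + t) ^ (2:ℝ)) ≤ 2 * (1 + t ^ 2) := by
        rw [Real.rpow_two]; nlinarith [sq_nonneg (1 - t)]
      have hsqpos : (0:ℝ) < (1 + t) ^ (2:ℝ) := Real.rpow_pos_of_pos h1t _
      have hstep : (2 * (1 + t ^ 2)) ^ (-ε : ℝ) ≤ ((1 + t) ^ (2:ℝ)) ^ (-ε : ℝ) :=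
        Real.rpow_le_rpow_of_nonpos hsqpos hsq (by linarith)
      have hmul : (2 * (1 + t ^ 2)) ^ (-ε : ℝ) = (2:ℝ) ^ (-ε : ℝ) * (1 + t ^ 2) ^ (-ε : ℝ) :=
        Real.mul_rpow (by norm_num) (hone t).le
      have hpow : ((1 + t) ^ (2:ℝ)) ^ (-ε : ℝ) = (1 + t) ^ (-(2*ε) : ℝ) := by
        rw [← Real.rpow_mul h1t.le]; ring_nf
      rw [hmul, hpow] at hstep
      have h2e : (0:ℝ) < (2:ℝ) ^ (ε : ℝ) := Real.rpow_pos_of_pos two_pos _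
      calc (1 + t ^ 2) ^ (-ε : ℝ)
          = (2:ℝ) ^ (ε:ℝ) * ((2:ℝ) ^ (-ε : ℝ) * (1 + t ^ 2) ^ (-ε : ℝ)) := by
            rw [← mul_assoc, ← Real.rpow_add two_pos]
            simp
        _ ≤ (2:ℝ) ^ (ε:ℝ) * (1 + t) ^ (-(2*ε) : ℝ) :=
            mul_le_mul_of_nonneg_left hstep h2e.le
    have hmono := intervalIntegral.integral_mono_on hX
      (hcont1.intervalIntegrable 0 X) (hcont2.intervalIntegrable (μ := volume)) hpt
    refine hmono.trans ?_
    have hcomp : (∫ t in (0:ℝ)..X, (1 + t) ^ (-(2*ε) : ℝ))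
        = ∫ u in (1:ℝ)..(1+X), u ^ (-(2*ε) : ℝ) := by
      simpa using intervalIntegral.integral_comp_add_left (a := (0:ℝ)) (b := X)
        (fun u : ℝ => u ^ (-(2*ε) : ℝ)) 1
    have hval : (∫ u in (1:ℝ)..(1+X), u ^ (-(2*ε) : ℝ))
        = ((1+X) ^ (1 - 2*ε) - 1) / (1 - 2*ε) := by
      rw [integral_rpow (Or.inl (by linarith))]
      rw [Real.one_rpow]
      norm_num
      ring_nf
    rw [intervalIntegral.integral_const_mul, hcomp, hval]
    have hA1 : (1:ℝ) ≤ (1 + X) ^ (1 - 2*ε) :=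
      Real.one_le_rpow (by linarith) (by linarith)
    have h2e : (0:ℝ) ≤ (2:ℝ) ^ (ε : ℝ) := (Real.rpow_pos_of_pos two_pos _).le
    rw [div_mul_eq_mul_div, mul_div_assoc]
    gcongr
    linarith
  -- Assemble
  set K : ℝ := C * ((2:ℝ) ^ ε / (1 - 2*ε)) ^ (1/2 : ℝ) * M with hKdef
  have hK0 : 0 ≤ K := by
    apply mul_nonneg (mul_nonneg hC0 (Real.rpow_nonneg ?_ _)) hM0
    have hd : (0:ℝ) < 1 - 2*ε := by linarith
    positivity
  refine ⟨1 + K, fun x => ?_⟩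
  have hd : (0:ℝ) < 1 - 2*ε := by linarith
  have hIbound : |∫ t in (0:ℝ)..x, φ t| ≤ K * (1 + |x|) ^ ((1/2 : ℝ) - ε) := by
    have hsplitK : ∀ X : ℝ, 0 ≤ X →
        C * ((∫ t in (0:ℝ)..X, (1 + t ^ 2) ^ (-ε : ℝ)) ^ (1/2 : ℝ)) * M
          ≤ K * (1 + X) ^ ((1/2 : ℝ) - ε) := by
      intro X hx0
      have hInonneg : (0:ℝ) ≤ ∫ t in (0:ℝ)..X, (1 + t ^ 2) ^ (-ε : ℝ) :=
        intervalIntegral.integral_nonneg hx0 fun t _ => Real.rpow_nonneg (hone t).le _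
      have h1 : ((∫ t in (0:ℝ)..X, (1 + t ^ 2) ^ (-ε : ℝ)) ^ (1/2 : ℝ))
          ≤ ((2:ℝ) ^ ε / (1 - 2*ε) * (1 + X) ^ (1 - 2*ε)) ^ (1/2 : ℝ) :=
        Real.rpow_le_rpow hInonneg (key3 X hx0) (by norm_num)
      have h2 : ((2:ℝ) ^ ε / (1 - 2*ε) * (1 + X) ^ (1 - 2*ε)) ^ (1/2 : ℝ)
          = ((2:ℝ) ^ ε / (1 - 2*ε)) ^ (1/2 : ℝ) * (1 + X) ^ ((1/2 : ℝ) - ε) := by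
        rw [Real.mul_rpow (by positivity) (Real.rpow_nonneg (by linarith) _)]
        congr 1
        rw [← Real.rpow_mul (by linarith)]
        ring_nf
      calc C * ((∫ t in (0:ℝ)..X, (1 + t ^ 2) ^ (-ε : ℝ)) ^ (1/2 : ℝ)) * M
          ≤ C * (((2:ℝ) ^ ε / (1 - 2*ε) * (1 + X) ^ (1 - 2*ε)) ^ (1/2 : ℝ)) * M := by
            exact mul_le_mul_of_nonneg_right (mul_le_mul_of_nonneg_left h1 hC0) hM0
        _ = K * (1 + X) ^ ((1/2 : ℝ) - ε) := by
            rw [h2, hKdef]; ring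
    rcases le_total 0 x with hx | hx
    · rw [abs_of_nonneg (intervalIntegral.integral_nonneg hx fun t _ => hφ_nonneg t),
        abs_of_nonneg hx]
      exact (keyCS 0 x hx).trans (hsplitK x hx)
    · rw [intervalIntegral.integral_symm, abs_neg,
        abs_of_nonneg (intervalIntegral.integral_nonneg hx fun t _ => hφ_nonneg t),
        abs_of_nonpos hx]
      refine (keyCS x 0 hx).trans ?_
      have hflip : (∫ t in x..(0:ℝ), (1 + t ^ 2) ^ (-ε : ℝ))
          = ∫ t in (0:ℝ)..(-x), (1 + t ^ 2) ^ (-ε : ℝ) := by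
        have := intervalIntegral.integral_comp_neg (a := (0:ℝ)) (b := -x)
          (f := fun t : ℝ => (1 + t ^ 2) ^ (-ε : ℝ))
        simp only [neg_neg, neg_zero] at this
        rw [← this]
        refine intervalIntegral.integral_congr fun t _ => ?_
        simp [neg_sq]
      rw [hflip]
      exact hsplitK (-x) (by linarith)
  have h1T : (1:ℝ) ≤ (1 + |x|) ^ ((1/2 : ℝ) - ε) :=
    Real.one_le_rpow (by linarith [abs_nonneg x]) (by linarith)
  calc 1 / ‖ψ x‖ ≤ 1 + |∫ t in (0:ℝ)..x, φ t| := key1 x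
    _ ≤ 1 + K * (1 + |x|) ^ ((1/2 : ℝ) - ε) := add_le_add_right hIbound 1
    _ ≤ (1 + K) * (1 + |x|) ^ ((1/2 : ℝ) - ε) := by nlinarith
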